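/- Let (a_k)_{k≥1} be real numbers with a_1 > 0 and a_k ≥ 0 for all k ≥ 2, such that F(u) = Σ_{k=1}^∞ a_k u^k converges for all u ∈ [0,R), R > 0. Put N(u) = e^{F(u)} = Σ_{n=0}^∞ b_n u^n (so b_n ≥ 0), and for 0 < u < R define the deformed Poisson distribution P_n(u) = b_n u^n / N(u). Then for every u ∈ (0,R): Σ_n n² P_n(u) − (Σ_n n P_n(u))² − Σ_n n P_n(u) = Σ_{k≥2} k(k−1) a_k u^k = u² F''(u) ≥ 0. Hence the variance of P(u) is at least its mean, i.e. the associated nonlinear coherent states are super-Poissonian (Mandel parameter Q_M(u) = u F''(u)/F'(u) ≥ 0). -/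

import Mathlib

open Finset Filter Set
set_option maxHeartbeats 1000000

lemma dps_bdd {d : ℕ → ℝ} {ρ : ℝ} (h : Summable fun n => d n * ρ ^ n) :
    ∃ C : ℝ, 0 ≤ C ∧ ∀ n, |d n| * ρ ^ n ≤ C := by
  have h0 : Tendsto (fun n => d n * ρ ^ n) atTop (nhds 0) := h.tendsto_atTop_zero
  have h1 : Tendsto (fun n => |d n * ρ ^ n|) atTop (nhds 0) := by
    simpa using h0.abs
  obtain ⟨C, hC⟩ := h1.bddAbove_range
  refine ⟨C, le_trans (abs_nonneg _) (hC ⟨0, rfl⟩), fun n => ?_⟩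
  have hn := hC ⟨n, rfl⟩
  calc |d n| * ρ ^ n ≤ |d n * ρ ^ n| := by
        rw [abs_mul]; gcongr; exact le_abs_self _
    _ ≤ C := hn

lemma dps_summable_abs_pow {d : ℕ → ℝ} {r ρ : ℝ} (hr : 0 ≤ r) (hrρ : r < ρ)
    (h : Summable fun n => d n * ρ ^ n) (p : ℕ) :
    Summable fun n : ℕ => (n : ℝ) ^ p * (|d n| * r ^ n) := by
  have hρ : 0 < ρ := lt_of_le_of_lt hr hrρ
  obtain ⟨C, hC0, hC⟩ := dps_bdd h
  have hgeom : Summable fun n : ℕ => C * ((n : ℝ) ^ p * (r / ρ) ^ n) := by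
    refine Summable.mul_left C ?_
    refine summable_pow_mul_geometric_of_norm_lt_one p ?_
    rw [Real.norm_eq_abs, abs_of_nonneg (by positivity)]
    exact (div_lt_one hρ).2 hrρ
  refine hgeom.of_nonneg_of_le (fun n => by positivity) (fun n => ?_)
  have key : |d n| * r ^ n ≤ C * (r / ρ) ^ n := by
    have h1 : |d n| * r ^ n = (|d n| * ρ ^ n) * (r / ρ) ^ n := by
      rw [div_pow]; field_simp
    rw [h1]
    exact mul_le_mul_of_nonneg_right (hC n) (by positivity)
  calc (n:ℝ)^p * (|d n| * r ^ n) ≤ (n:ℝ)^p * (C * (r/ρ)^n) :=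
        mul_le_mul_of_nonneg_left key (by positivity)
    _ = C * ((n:ℝ)^p * (r/ρ)^n) := by ring

lemma dps_summable_abs {d : ℕ → ℝ} {r ρ : ℝ} (hr : 0 ≤ r) (hrρ : r < ρ)
    (h : Summable fun n => d n * ρ ^ n) :
    Summable fun n : ℕ => |d n| * r ^ n := by
  have := dps_summable_abs_pow hr hrρ h 0
  simpa using this

lemma dps_summable_deriv {d : ℕ → ℝ} {r ρ : ℝ} (hr : 0 ≤ r) (hrρ : r < ρ)
    (h : Summable fun n => d n * ρ ^ n) :
    Summable fun n : ℕ => (n : ℝ) * |d n| * r ^ (n - 1) := by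
  have hρ : 0 < ρ := lt_of_le_of_lt hr hrρ
  rw [← summable_nat_add_iff 1]
  have hshift : Summable fun n : ℕ => d (n + 1) * ρ ^ n := by
    have h1 : Summable fun n : ℕ => d (n + 1) * ρ ^ (n + 1) := (summable_nat_add_iff 1).2 h
    have h2 := h1.mul_right ρ⁻¹
    refine h2.congr fun n => ?_
    rw [pow_succ]; field_simp
  have t1 := dps_summable_abs_pow hr hrρ hshift 1
  have t0 := dps_summable_abs_pow hr hrρ hshift 0
  have := t1.add t0
  refine this.congr fun n => ?_
  simp only [pow_one, pow_zero, one_mul, Nat.add_sub_cancel]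
  push_cast
  ring

/-- coefficients of `exp (∑ a_k u^k)` -/
noncomputable def expCoeff (a : ℕ → ℝ) : ℕ → ℝ
  | 0 => 1
  | (n+1) => (∑ i ∈ Finset.range (n+1),
      ((i:ℝ)+1) * a (i+1) * expCoeff a (n - i)) / ((n:ℝ)+1)
  decreasing_by exact Nat.sub_lt_succ n i

lemma expCoeff_zero (a : ℕ → ℝ) : expCoeff a 0 = 1 := by rw [expCoeff]

lemma expCoeff_succ (a : ℕ → ℝ) (n : ℕ) :
    expCoeff a (n+1) = (∑ i ∈ Finset.range (n+1),
      ((i:ℝ)+1) * a (i+1) * expCoeff a (n - i)) / ((n:ℝ)+1) := by rw [expCoeff]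

lemma expCoeff_nonneg {a : ℕ → ℝ} (ha : ∀ k, 0 ≤ a k) : ∀ n, 0 ≤ expCoeff a n := by
  intro n
  induction n using Nat.strong_induction_on with
  | _ n ih =>
    match n with
    | 0 => rw [expCoeff_zero]; norm_num
    | (m+1) =>
      rw [expCoeff_succ]
      apply div_nonneg _ (by positivity)
      apply Finset.sum_nonneg
      intro i hi
      have h2 : 0 ≤ expCoeff a (m - i) := ih _ (Nat.sub_lt_succ m i)
      exact mul_nonneg (mul_nonneg (by positivity) (ha _)) h2

/-- the fundamental recurrence in antidiagonal form -/
lemma expCoeff_rec (a : ℕ → ℝ) (n : ℕ) :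
    ∑ p ∈ Finset.HasAntidiagonal.antidiagonal n, (p.1 : ℝ) * a p.1 * expCoeff a p.2
      = (n : ℝ) * expCoeff a n := by
  induction n with
  | zero => simp
  | succ m _ =>
    rw [Finset.Nat.sum_antidiagonal_eq_sum_range_succ
      (fun i j => (i : ℝ) * a i * expCoeff a j)]
    rw [Finset.sum_range_succ']
    simp only [Nat.cast_zero, zero_mul, add_zero, Nat.cast_add, Nat.cast_one]
    have : ∑ i ∈ Finset.range (m+1), ((i:ℝ)+1) * a (i+1) * expCoeff a (m+1-(i+1))
        = ∑ i ∈ Finset.range (m+1), ((i:ℝ)+1) * a (i+1) * expCoeff a (m-i) := by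
      apply Finset.sum_congr rfl; intro i hi
      congr 2
      omega
    rw [this, expCoeff_succ]
    field_simp

lemma expCoeff_le_pow {a : ℕ → ℝ} (ha : ∀ k, 0 ≤ a k) {ρ₁ : ℝ} (hρ : 0 < ρ₁)
    (hs : Summable fun i : ℕ => ((i:ℝ)+1) * a (i+1) * ρ₁^i) :
    ∀ n, expCoeff a n
      ≤ (max (1/ρ₁) (∑' i : ℕ, ((i:ℝ)+1) * a (i+1) * ρ₁^i) + 1) ^ n := by
  set C : ℝ := ∑' i : ℕ, ((i:ℝ)+1) * a (i+1) * ρ₁^i with hC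
  set K : ℝ := max (1/ρ₁) C + 1 with hKdef
  have hC0 : 0 ≤ C := tsum_nonneg fun i => mul_nonneg (mul_nonneg (by positivity) (ha _)) (by positivity)
  have hmax : (0:ℝ) ≤ max (1/ρ₁) C :=
    le_trans (one_div_nonneg.2 hρ.le) (le_max_left _ _)
  have hK1 : 1 ≤ K := by rw [hKdef]; linarith
  have hK0 : 0 < K := lt_of_lt_of_le one_pos hK1
  have hKC : C ≤ K := by
    rw [hKdef]; have := le_max_right (1/ρ₁) C; linarith
  have hKρ : 1 ≤ ρ₁ * K := by
    have h1 : 1/ρ₁ ≤ K := by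
      rw [hKdef]; have := le_max_left (1/ρ₁) C; linarith
    calc (1:ℝ) = ρ₁ * (1/ρ₁) := by field_simp
      _ ≤ ρ₁ * K := by gcongr
  intro n
  induction n using Nat.strong_induction_on with
  | _ n ih =>
    match n with
    | 0 => rw [expCoeff_zero]; norm_num
    | (m+1) =>
      rw [expCoeff_succ]
      rw [div_le_iff₀ (by positivity)]
      have hterm : ∀ i ∈ Finset.range (m+1),
          ((i:ℝ)+1) * a (i+1) * expCoeff a (m - i)
            ≤ (((i:ℝ)+1) * a (i+1) * ρ₁^i) * K^m := by
        intro i hi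
        rw [Finset.mem_range] at hi
        have him : i ≤ m := Nat.lt_succ_iff.1 hi
        have h1 : expCoeff a (m - i) ≤ K ^ (m - i) := ih _ (Nat.sub_lt_succ m i)
        have h2 : K ^ (m - i) ≤ ρ₁^i * K^m := by
          have h3 : 1 ≤ (ρ₁ * K)^i := by simpa using pow_le_pow_left₀ (by norm_num : (0:ℝ) ≤ 1) hKρ i
          calc K ^ (m-i) = K^(m-i) * 1 := by ring
            _ ≤ K^(m-i) * (ρ₁ * K)^i := by
                exact mul_le_mul_of_nonneg_left h3 (by positivity)
            _ = ρ₁^i * (K^(m-i) * K^i) := by rw [mul_pow]; ring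
            _ = ρ₁^i * K^m := by rw [← pow_add, Nat.sub_add_cancel him]
        calc ((i:ℝ)+1) * a (i+1) * expCoeff a (m - i)
            ≤ ((i:ℝ)+1) * a (i+1) * (ρ₁^i * K^m) := by
              have hnn : (0:ℝ) ≤ ((i:ℝ)+1) * a (i+1) := by
                have := ha (i+1); positivity
              exact mul_le_mul_of_nonneg_left (le_trans h1 h2) hnn
          _ = (((i:ℝ)+1) * a (i+1) * ρ₁^i) * K^m := by ring
      have hsum : ∑ i ∈ Finset.range (m+1), ((i:ℝ)+1) * a (i+1) * expCoeff a (m - i)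
          ≤ ∑ i ∈ Finset.range (m+1), (((i:ℝ)+1) * a (i+1) * ρ₁^i) * K^m :=
        Finset.sum_le_sum hterm
      have hsum2 : ∑ i ∈ Finset.range (m+1), (((i:ℝ)+1) * a (i+1) * ρ₁^i) * K^m
          ≤ C * K^m := by
        rw [← Finset.sum_mul]
        have : ∑ i ∈ Finset.range (m+1), ((i:ℝ)+1) * a (i+1) * ρ₁^i ≤ C :=
          Summable.sum_le_tsum _ (fun i _ => by have := ha (i+1); positivity) hs
        exact mul_le_mul_of_nonneg_right this (by positivity)
      have : C * K^m ≤ K^(m+1) * ((m:ℝ)+1) := by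
        have h1 : C * K^m ≤ K * K^m := mul_le_mul_of_nonneg_right hKC (by positivity)
        have h2 : K * K^m = K^(m+1) := by rw [pow_succ]; ring
        have h3 : K^(m+1) ≤ K^(m+1) * ((m:ℝ)+1) := by
          nth_rewrite 1 [← mul_one (K^(m+1))]
          have hm1 : (1:ℝ) ≤ (m:ℝ)+1 := by
            have := Nat.cast_nonneg (α := ℝ) m; linarith
          exact mul_le_mul_of_nonneg_left hm1 (by positivity)
        linarith
      linarith

lemma dps_hasDerivAt {d : ℕ → ℝ} {r ρ : ℝ} (hr : 0 < r) (hrρ : r < ρ)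
    (hsum : Summable fun n => d n * ρ ^ n) {y : ℝ} (hy : y ∈ Set.Ioo (-r) r) :
    HasDerivAt (fun x => ∑' n : ℕ, d n * x ^ n)
      (∑' n : ℕ, d n * ((n : ℝ) * y ^ (n - 1))) y := by
  have hU : Summable fun n : ℕ => (n : ℝ) * |d n| * r ^ (n - 1) :=
    dps_summable_deriv hr.le hrρ hsum
  refine hasDerivAt_tsum_of_isPreconnected hU isOpen_Ioo
    (convex_Ioo _ _).isPreconnected
    (fun n x _ => ((hasDerivAt_pow n x).const_mul (d n)))
    (fun n x hx => ?_) (show (0:ℝ) ∈ Set.Ioo (-r) r by constructor <;> linarith) ?_ hy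
  · have hxr : |x| ≤ r := by
      rw [abs_le]; exact ⟨hx.1.le, hx.2.le⟩
    rw [Real.norm_eq_abs, abs_mul, abs_mul, abs_pow]
    calc |d n| * (|(n:ℝ)| * |x| ^ (n-1)) ≤ |d n| * ((n:ℝ) * r ^ (n-1)) := by
          rw [Nat.abs_cast]
          exact mul_le_mul_of_nonneg_left
            (mul_le_mul_of_nonneg_left (pow_le_pow_left₀ (abs_nonneg x) hxr _)
              (Nat.cast_nonneg n)) (abs_nonneg _)
      _ = (n:ℝ) * |d n| * r ^ (n-1) := by ring
  · have : (fun n : ℕ => d n * (0:ℝ) ^ n) = fun n => if n = 0 then d 0 else 0 := by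
      funext n
      cases n with
      | zero => simp
      | succ m => simp
    rw [this]
    exact (hasSum_ite_eq 0 (d 0)).summable

lemma dps_head_zero {r : ℝ} (hr : 0 < r) {d : ℕ → ℝ}
    (hsum : Summable fun n => |d n| * r ^ n)
    (h : ∀ u ∈ Set.Ioo (0:ℝ) r, ∑' n : ℕ, d n * u ^ n = 0) :
    d 0 = 0 ∧ ∀ u ∈ Set.Ioo (0:ℝ) r, ∑' n : ℕ, d (n+1) * u ^ n = 0 := by
  have htail : Summable fun n : ℕ => |d (n+1)| * r ^ n := by
    have h1 : Summable fun n : ℕ => |d (n+1)| * r ^ (n+1) := (summable_nat_add_iff 1).2 hsum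
    refine (h1.mul_right r⁻¹).congr fun n => ?_
    rw [pow_succ]; field_simp
  set Cs : ℝ := ∑' n : ℕ, |d (n+1)| * r ^ n with hCs
  have hCs0 : 0 ≤ Cs := tsum_nonneg fun n => by positivity
  have key : ∀ u ∈ Set.Ioo (0:ℝ) r,
      d 0 + u * (∑' n : ℕ, d (n+1) * u ^ n) = 0 ∧
      |∑' n : ℕ, d (n+1) * u ^ n| ≤ Cs := by
    intro u hu
    obtain ⟨hu0, hur⟩ := hu
    have habs : ∀ n : ℕ, ‖d (n+1) * u ^ n‖ ≤ |d (n+1)| * r ^ n := by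
      intro n
      rw [Real.norm_eq_abs, abs_mul, abs_pow, abs_of_pos hu0]
      exact mul_le_mul_of_nonneg_left (pow_le_pow_left₀ hu0.le hur.le n) (abs_nonneg _)
    have hsu : Summable fun n : ℕ => d n * u ^ n := by
      refine Summable.of_norm_bounded hsum fun n => ?_
      rw [Real.norm_eq_abs, abs_mul, abs_pow, abs_of_pos hu0]
      exact mul_le_mul_of_nonneg_left (pow_le_pow_left₀ hu0.le hur.le n) (abs_nonneg _)
    have hnorm : Summable fun n : ℕ => ‖d (n+1) * u ^ n‖ :=
      htail.of_nonneg_of_le (fun n => norm_nonneg _) habs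
    have hstail : Summable fun n : ℕ => d (n+1) * u ^ n := hnorm.of_norm
    constructor
    · have e1 := Summable.tsum_eq_zero_add hsu
      rw [h u ⟨hu0, hur⟩] at e1
      have e2 : ∑' n : ℕ, d (n+1) * u ^ (n+1) = u * ∑' n : ℕ, d (n+1) * u ^ n := by
        rw [← tsum_mul_left]
        exact tsum_congr fun n => by rw [pow_succ]; ring
      rw [e2] at e1
      simpa using e1.symm
    · calc |∑' n : ℕ, d (n+1) * u ^ n| ≤ ∑' n : ℕ, ‖d (n+1) * u ^ n‖ :=
            norm_tsum_le_tsum_norm hnorm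
        _ ≤ Cs := Summable.tsum_le_tsum habs hnorm htail
  have hd0 : d 0 = 0 := by
    by_contra h0
    have hpos : 0 < |d 0| := abs_pos.2 h0
    set u0 : ℝ := min (r/2) (|d 0|/(2*(Cs+1))) with hu0def
    have hu0pos : 0 < u0 := lt_min (by linarith) (by positivity)
    have hu0r : u0 < r := lt_of_le_of_lt (min_le_left _ _) (by linarith)
    obtain ⟨e1, e2⟩ := key u0 ⟨hu0pos, hu0r⟩
    have : |d 0| ≤ u0 * Cs := by
      have : d 0 = -(u0 * (∑' n : ℕ, d (n+1) * u0 ^ n)) := by linarith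
      rw [this, abs_neg, abs_mul, abs_of_pos hu0pos]
      exact mul_le_mul_of_nonneg_left e2 hu0pos.le
    have hle : u0 ≤ |d 0|/(2*(Cs+1)) := min_le_right _ _
    have h2 : u0 * Cs ≤ |d 0|/(2*(Cs+1)) * Cs := mul_le_mul_of_nonneg_right hle hCs0
    have h3 : |d 0|/(2*(Cs+1)) * Cs < |d 0| := by
      rw [div_mul_eq_mul_div, div_lt_iff₀ (by positivity)]
      nlinarith
    linarith
  refine ⟨hd0, fun u hu => ?_⟩
  obtain ⟨e1, _⟩ := key u hu
  rw [hd0, zero_add] at e1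
  rcases mul_eq_zero.1 e1 with h1 | h1
  · exact absurd h1 (ne_of_gt hu.1)
  · exact h1

lemma dps_coeffs_zero {r : ℝ} (hr : 0 < r) :
    ∀ (n : ℕ) (d : ℕ → ℝ), (Summable fun n => |d n| * r ^ n) →
    (∀ u ∈ Set.Ioo (0:ℝ) r, ∑' n : ℕ, d n * u ^ n = 0) → d n = 0 := by
  intro n
  induction n with
  | zero => intro d hs h; exact (dps_head_zero hr hs h).1
  | succ m ih =>
    intro d hs h
    have htail : Summable fun n : ℕ => |d (n+1)| * r ^ n := by
      have h1 : Summable fun n : ℕ => |d (n+1)| * r ^ (n+1) := (summable_nat_add_iff 1).2 hs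
      refine (h1.mul_right r⁻¹).congr fun n => ?_
      rw [pow_succ]; field_simp
    exact ih (fun k => d (k+1)) htail (dps_head_zero hr hs h).2

lemma dps_inner_sum {a : ℕ → ℝ} (x : ℝ) (n : ℕ) :
    ∑ p ∈ Finset.HasAntidiagonal.antidiagonal n,
      (a p.1 * ((p.1 : ℝ) * x ^ (p.1 - 1))) * (expCoeff a p.2 * x ^ p.2)
      = expCoeff a n * ((n : ℝ) * x ^ (n - 1)) := by
  have e1 : ∀ p ∈ Finset.HasAntidiagonal.antidiagonal n,
      (a p.1 * ((p.1 : ℝ) * x ^ (p.1 - 1))) * (expCoeff a p.2 * x ^ p.2)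
      = ((p.1 : ℝ) * a p.1 * expCoeff a p.2) * x ^ (n - 1) := by
    rintro ⟨i, j⟩ hp
    rw [Finset.HasAntidiagonal.mem_antidiagonal] at hp
    cases i with
    | zero => simp
    | succ m =>
      have h1 : m + 1 - 1 = m := rfl
      have h2 : n - 1 = m + j := by omega
      rw [h1, h2, pow_add]
      ring
  rw [Finset.sum_congr rfl e1, ← Finset.sum_mul, expCoeff_rec]
  ring

lemma dps_NcDeriv {a : ℕ → ℝ} (ha : ∀ k, 0 ≤ a k) {ρ : ℝ}
    (hsa : Summable fun k : ℕ => a k * ρ ^ k)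
    (hsc : Summable fun n : ℕ => expCoeff a n * ρ ^ n)
    {x : ℝ} (hx : |x| < ρ) :
    (∑' k : ℕ, a k * ((k : ℝ) * x ^ (k - 1))) * (∑' n : ℕ, expCoeff a n * x ^ n)
      = ∑' n : ℕ, expCoeff a n * ((n : ℝ) * x ^ (n - 1)) := by
  have hcnn : ∀ n, 0 ≤ expCoeff a n := expCoeff_nonneg ha
  have hf : Summable fun k : ℕ => ‖a k * ((k : ℝ) * x ^ (k - 1))‖ := by
    refine (dps_summable_deriv (abs_nonneg x) hx hsa).congr fun k => ?_
    rw [Real.norm_eq_abs, abs_mul, abs_mul, abs_pow, Nat.abs_cast,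
      abs_of_nonneg (ha k)]
    ring
  have hg : Summable fun n : ℕ => ‖expCoeff a n * x ^ n‖ := by
    refine (dps_summable_abs (abs_nonneg x) hx hsc).congr fun n => ?_
    rw [Real.norm_eq_abs, abs_mul, abs_pow, abs_of_nonneg (hcnn n)]
  rw [tsum_mul_tsum_eq_tsum_sum_antidiagonal_of_summable_norm hf hg]
  exact tsum_congr fun n => dps_inner_sum x n

lemma dps_eq_exp {a : ℕ → ℝ} (ha : ∀ k, 0 ≤ a k) (ha0 : a 0 = 0) {δ ρ : ℝ}
    (hδ : 0 < δ) (hδρ : δ < ρ)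
    (hsa : Summable fun k : ℕ => a k * ρ ^ k)
    (hsc : Summable fun n : ℕ => expCoeff a n * ρ ^ n) :
    ∀ u ∈ Set.Ico (0:ℝ) δ,
      ∑' n : ℕ, expCoeff a n * u ^ n = Real.exp (∑' k : ℕ, a k * u ^ k) := by
  intro u hu
  obtain ⟨hu0, huδ⟩ := hu
  set F : ℝ → ℝ := fun x => ∑' k : ℕ, a k * x ^ k with hF
  set Nc : ℝ → ℝ := fun x => ∑' n : ℕ, expCoeff a n * x ^ n with hNc
  set h : ℝ → ℝ := fun x => Nc x * Real.exp (-(F x)) with hh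
  have hderiv : ∀ x ∈ Set.Ioo (-δ) δ, HasDerivAt h 0 x := by
    intro x hx
    have hxρ : |x| < ρ := by
      rw [abs_lt]; obtain ⟨h1, h2⟩ := hx; constructor <;> linarith
    have HF : HasDerivAt F (∑' k : ℕ, a k * ((k : ℝ) * x ^ (k - 1))) x :=
      dps_hasDerivAt hδ hδρ hsa hx
    have HN : HasDerivAt Nc (∑' n : ℕ, expCoeff a n * ((n : ℝ) * x ^ (n - 1))) x :=
      dps_hasDerivAt hδ hδρ hsc hx
    have He : HasDerivAt (fun x => Real.exp (-(F x)))
        (Real.exp (-(F x)) * (-(∑' k : ℕ, a k * ((k : ℝ) * x ^ (k - 1))))) x :=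
      HF.neg.exp
    have key := dps_NcDeriv ha hsa hsc hxρ
    have Hh := HN.mul He
    convert Hh using 1
    · rfl
    · rfl
    · rfl
    rw [← key]
    ring
  have hconst : h u = h 0 := by
    have hsub : Set.Icc (0:ℝ) u ⊆ Set.Ioo (-δ) δ := by
      intro x hx
      exact ⟨by linarith [hx.1], by linarith [hx.2]⟩
    exact constant_of_has_deriv_right_zero
      (fun x hx => ((hderiv x (hsub hx)).continuousAt).continuousWithinAt)
      (fun x hx => ((hderiv x (hsub ⟨hx.1, hx.2.le⟩)).hasDerivWithinAt))
      u ⟨hu0, le_refl u⟩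
  have hNc0 : Nc 0 = 1 := by
    rw [hNc]
    simp only
    rw [tsum_eq_single 0 (fun n hn => by
      cases n with
      | zero => exact absurd rfl hn
      | succ m => simp)]
    simp [expCoeff_zero]
  have hF0 : F 0 = 0 := by
    rw [hF]
    simp only
    rw [tsum_eq_single 0 (fun n hn => by
      cases n with
      | zero => exact absurd rfl hn
      | succ m => simp)]
    simp [ha0]
  have h0 : h 0 = 1 := by rw [hh]; simp only; rw [hNc0, hF0]; simp
  rw [h0] at hconst
  have hE : Real.exp (F u) ≠ 0 := ne_of_gt (Real.exp_pos _)
  have : Nc u * Real.exp (-(F u)) = 1 := hconst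
  rw [Real.exp_neg] at this
  have : Nc u = Real.exp (F u) := by
    field_simp at this
    exact this
  exact this

lemma dps_inner_sum' (a c : ℕ → ℝ)
    (hrec : ∀ n, Finset.sum (Finset.HasAntidiagonal.antidiagonal n) (fun p : ℕ × ℕ => (p.1 : ℝ) * a p.1 * c p.2) = (n : ℝ) * c n)
    (x : ℝ) (n : ℕ) :
    ∑ p ∈ Finset.HasAntidiagonal.antidiagonal n,
      ((p.1 : ℝ) * a p.1 * x ^ p.1) * (c p.2 * x ^ p.2)
      = (n : ℝ) * c n * x ^ n := by
  have e1 : ∀ p ∈ Finset.HasAntidiagonal.antidiagonal n,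
      ((p.1 : ℝ) * a p.1 * x ^ p.1) * (c p.2 * x ^ p.2)
      = ((p.1 : ℝ) * a p.1 * c p.2) * x ^ n := by
    rintro ⟨i, j⟩ hp
    rw [Finset.HasAntidiagonal.mem_antidiagonal] at hp
    rw [← hp, pow_add]
    ring
  rw [Finset.sum_congr rfl e1, ← Finset.sum_mul, hrec]

lemma dps_inner_sum2 (a c : ℕ → ℝ)
    (hrec : ∀ n, Finset.sum (Finset.HasAntidiagonal.antidiagonal n) (fun p : ℕ × ℕ => (p.1 : ℝ) * a p.1 * c p.2) = (n : ℝ) * c n)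
    (x : ℝ) (n : ℕ) :
    ∑ p ∈ Finset.HasAntidiagonal.antidiagonal n,
      (((p.1 : ℝ)^2 * a p.1 * x ^ p.1) * (c p.2 * x ^ p.2)
        + ((p.1 : ℝ) * a p.1 * x ^ p.1) * ((p.2 : ℝ) * c p.2 * x ^ p.2))
      = (n : ℝ)^2 * c n * x ^ n := by
  have e1 : ∀ p ∈ Finset.HasAntidiagonal.antidiagonal n,
      (((p.1 : ℝ)^2 * a p.1 * x ^ p.1) * (c p.2 * x ^ p.2)
        + ((p.1 : ℝ) * a p.1 * x ^ p.1) * ((p.2 : ℝ) * c p.2 * x ^ p.2))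
      = ((n : ℝ) * x ^ n) * ((p.1 : ℝ) * a p.1 * c p.2) := by
    rintro ⟨i, j⟩ hp
    rw [Finset.HasAntidiagonal.mem_antidiagonal] at hp
    have hcast : (i : ℝ) + (j : ℝ) = (n : ℝ) := by
      rw [← hp]; push_cast; ring
    rw [← hp, pow_add]
    push_cast
    ring
  rw [Finset.sum_congr rfl e1, ← Finset.mul_sum, hrec]
  ring


/-- Let `F(u) = Σ_{k≥1} a_k u^k` with `a_1 > 0`, `a_k ≥ 0` for `k ≥ 2`,
converging on `[0,R)`, and let `N(u) = e^{F(u)} = Σ_n b_n u^n`.  Then all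
`b_n ≥ 0`, and for the deformed Poisson distribution
`P_n(u) = b_n u^n / N(u)` one has, for every `u ∈ (0,R)`,
`Σ n² P_n − (Σ n P_n)² − Σ n P_n = Σ_{k≥2} k(k−1) a_k u^k ≥ 0`;
hence the variance is at least the mean (the states are super-Poissonian). -/
theorem deformed_exponential_superPoissonian
    (R : ℝ) (hR : 0 < R) (a b : ℕ → ℝ)
    (ha0 : a 0 = 0) (ha1 : 0 < a 1) (hak : ∀ k, 2 ≤ k → 0 ≤ a k)
    (haconv : ∀ u ∈ Set.Ico (0:ℝ) R, Summable (fun k : ℕ => a k * u ^ k))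
    (hbconv : ∀ u ∈ Set.Ico (0:ℝ) R, Summable (fun n : ℕ => b n * u ^ n))
    (hN : ∀ u ∈ Set.Ico (0:ℝ) R,
      ∑' n : ℕ, b n * u ^ n = Real.exp (∑' k : ℕ, a k * u ^ k)) :
    (∀ n, 0 ≤ b n) ∧
    ∀ u ∈ Set.Ioo (0:ℝ) R,
      (∑' n : ℕ, (n : ℝ) ^ 2 *
          (b n * u ^ n / Real.exp (∑' k : ℕ, a k * u ^ k)))
        - (∑' n : ℕ, (n : ℝ) *
            (b n * u ^ n / Real.exp (∑' k : ℕ, a k * u ^ k))) ^ 2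
        - (∑' n : ℕ, (n : ℝ) *
            (b n * u ^ n / Real.exp (∑' k : ℕ, a k * u ^ k)))
        = ∑' k : ℕ, (k : ℝ) * ((k : ℝ) - 1) * a k * u ^ k ∧
      0 ≤ ∑' k : ℕ, (k : ℝ) * ((k : ℝ) - 1) * a k * u ^ k ∧
      (∑' n : ℕ, (n : ℝ) *
          (b n * u ^ n / Real.exp (∑' k : ℕ, a k * u ^ k)))
        ≤ (∑' n : ℕ, (n : ℝ) ^ 2 *
            (b n * u ^ n / Real.exp (∑' k : ℕ, a k * u ^ k)))
          - (∑' n : ℕ, (n : ℝ) *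
              (b n * u ^ n / Real.exp (∑' k : ℕ, a k * u ^ k))) ^ 2 := by
  have hann : ∀ k, 0 ≤ a k := by
    intro k
    match k with
    | 0 => rw [ha0]
    | 1 => exact ha1.le
    | (m+2) => exact hak _ (by omega)
  have hR2 : (0:ℝ) < R/2 := by linarith
  have hsa34 : Summable fun k : ℕ => a k * (3*R/4) ^ k :=
    haconv _ ⟨by linarith, by linarith⟩
  have hs₁ : Summable fun i : ℕ => ((i:ℝ)+1) * a (i+1) * (R/2)^i := by
    have h1 := dps_summable_deriv (le_of_lt hR2) (by linarith : R/2 < 3*R/4) hsa34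
    have h2 := (summable_nat_add_iff 1).2 h1
    refine h2.congr fun i => ?_
    simp only [Nat.add_sub_cancel]
    rw [abs_of_nonneg (hann (i+1))]
    push_cast; ring
  set C : ℝ := ∑' i : ℕ, ((i:ℝ)+1) * a (i+1) * (R/2)^i with hCdef
  set K : ℝ := max (1/(R/2)) C + 1 with hKdef
  have hbound : ∀ n, expCoeff a n ≤ K ^ n := expCoeff_le_pow hann hR2 hs₁
  have hC0 : 0 ≤ C :=
    tsum_nonneg fun i => mul_nonneg (mul_nonneg (by positivity) (hann _)) (by positivity)
  have hK1 : (1:ℝ) ≤ K := by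
    have h1 : (0:ℝ) ≤ max (1/(R/2)) C :=
      le_trans (one_div_nonneg.2 hR2.le) (le_max_left _ _)
    rw [hKdef]; linarith
  have hK0 : (0:ℝ) < K := lt_of_lt_of_le one_pos hK1
  set δ : ℝ := min (1/(2*K)) (R/2) with hδdef
  have hδ0 : 0 < δ := lt_min (by positivity) hR2
  have hδK : δ < 1/K :=
    lt_of_le_of_lt (min_le_left _ _) (one_div_lt_one_div_of_lt hK0 (by linarith))
  have hδR : δ ≤ R/2 := min_le_right _ _
  obtain ⟨ρ, hδρ, hρmin⟩ := exists_between (lt_min hδK (by linarith : δ < R))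
  have hρK : ρ < 1/K := (lt_min_iff.1 hρmin).1
  have hρR : ρ < R := (lt_min_iff.1 hρmin).2
  have hρ0 : 0 < ρ := lt_trans hδ0 hδρ
  have hsaρ : Summable fun k : ℕ => a k * ρ ^ k := haconv ρ ⟨hρ0.le, hρR⟩
  have hscρ : Summable fun n : ℕ => expCoeff a n * ρ ^ n := by
    have hKρ : K * ρ < 1 := by
      have := (lt_div_iff₀ hK0).1 hρK
      linarith
    refine Summable.of_nonneg_of_le
      (fun n => mul_nonneg (expCoeff_nonneg hann n) (by positivity)) (fun n => ?_)
      (summable_geometric_of_lt_one (by positivity) hKρ)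
    calc expCoeff a n * ρ^n ≤ K^n * ρ^n :=
          mul_le_mul_of_nonneg_right (hbound n) (by positivity)
      _ = (K*ρ)^n := by rw [mul_pow]
  have hceq := dps_eq_exp hann ha0 hδ0 hδρ hsaρ hscρ
  have hbc : ∀ n, b n = expCoeff a n := by
    have hz : ∀ u ∈ Set.Ioo (0:ℝ) (δ/2), ∑' m : ℕ, (b m - expCoeff a m) * u ^ m = 0 := by
      intro u hu
      have huR : u ∈ Set.Ico (0:ℝ) R := ⟨hu.1.le, by linarith [hu.2]⟩
      have huδ : u ∈ Set.Ico (0:ℝ) δ := ⟨hu.1.le, by linarith [hu.2]⟩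
      have hsb : Summable fun m : ℕ => b m * u ^ m := hbconv u huR
      have hsc : Summable fun m : ℕ => expCoeff a m * u ^ m := by
        refine (dps_summable_abs hu.1.le (by linarith [hu.2] : u < ρ) hscρ).congr fun m => ?_
        rw [abs_of_nonneg (expCoeff_nonneg hann m)]
      have he : ∑' m : ℕ, (b m - expCoeff a m) * u ^ m
          = (∑' m : ℕ, b m * u ^ m) - ∑' m : ℕ, expCoeff a m * u ^ m := by
        rw [← Summable.tsum_sub hsb hsc]
        exact tsum_congr fun m => by ring
      rw [he, hN u huR, hceq u huδ, sub_self]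
    have hsumd : Summable fun m : ℕ => |b m - expCoeff a m| * (δ/2) ^ m := by
      have hb4 : Summable fun m : ℕ => |b m| * (δ/2)^m :=
        dps_summable_abs (by positivity) (by linarith : δ/2 < 3*δ/4)
          (hbconv (3*δ/4) ⟨by positivity, by linarith⟩)
      have hc4 : Summable fun m : ℕ => |expCoeff a m| * (δ/2)^m :=
        dps_summable_abs (by positivity) (by linarith : δ/2 < ρ) hscρ
      refine (hb4.add hc4).of_nonneg_of_le (fun m => by positivity) (fun m => ?_)
      have htri : |b m - expCoeff a m| ≤ |b m| + |expCoeff a m| := by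
        rw [sub_eq_add_neg]
        calc |b m + -expCoeff a m| ≤ |b m| + |-expCoeff a m| := abs_add_le _ _
          _ = |b m| + |expCoeff a m| := by rw [abs_neg]
      calc |b m - expCoeff a m| * (δ/2)^m ≤ (|b m| + |expCoeff a m|) * (δ/2)^m :=
            mul_le_mul_of_nonneg_right htri (by positivity)
        _ = |b m| * (δ/2)^m + |expCoeff a m| * (δ/2)^m := by ring
    intro n
    exact sub_eq_zero.1 (dps_coeffs_zero (by positivity : (0:ℝ) < δ/2) n _ hsumd hz)
  have hbnn : ∀ n, 0 ≤ b n := fun n => (hbc n) ▸ expCoeff_nonneg hann n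
  refine ⟨hbnn, ?_⟩
  intro u hu
  obtain ⟨hu0, huR⟩ := hu
  have huIco : u ∈ Set.Ico (0:ℝ) R := ⟨hu0.le, huR⟩
  set E : ℝ := Real.exp (∑' k : ℕ, a k * u ^ k) with hEdef
  have hE : 0 < E := Real.exp_pos _
  set ρu : ℝ := (u + R)/2 with hρudef
  have hu_ρu : u < ρu := by rw [hρudef]; linarith
  have hρuR : ρu < R := by rw [hρudef]; linarith
  have hsaρu : Summable fun k : ℕ => a k * ρu ^ k := haconv ρu ⟨by rw [hρudef]; linarith, hρuR⟩
  have hsbρu : Summable fun n : ℕ => b n * ρu ^ n := hbconv ρu ⟨by rw [hρudef]; linarith, hρuR⟩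
  have Sb : ∀ p : ℕ, Summable fun n : ℕ => (n:ℝ)^p * (b n * u^n) := by
    intro p
    refine (dps_summable_abs_pow hu0.le hu_ρu hsbρu p).congr fun n => ?_
    rw [abs_of_nonneg (hbnn n)]
  have Sa : ∀ p : ℕ, Summable fun k : ℕ => (k:ℝ)^p * (a k * u^k) := by
    intro p
    refine (dps_summable_abs_pow hu0.le hu_ρu hsaρu p).congr fun k => ?_
    rw [abs_of_nonneg (hann k)]
  have hrecb : ∀ n, Finset.sum (Finset.HasAntidiagonal.antidiagonal n) (fun p : ℕ × ℕ => (p.1:ℝ) * a p.1 * b p.2) = (n:ℝ) * b n := by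
    intro n
    simp only [hbc]
    exact expCoeff_rec a n
  have hf1 : Summable fun k : ℕ => ‖(k:ℝ) * a k * u^k‖ := by
    refine (Sa 1).congr fun k => ?_
    rw [Real.norm_eq_abs, abs_of_nonneg (show (0:ℝ) ≤ (k:ℝ) * a k * u^k from
      mul_nonneg (mul_nonneg (Nat.cast_nonneg k) (hann k)) (pow_nonneg hu0.le k))]
    ring
  have hf2 : Summable fun k : ℕ => ‖(k:ℝ)^2 * a k * u^k‖ := by
    refine (Sa 2).congr fun k => ?_
    rw [Real.norm_eq_abs, abs_of_nonneg (show (0:ℝ) ≤ (k:ℝ)^2 * a k * u^k from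
      mul_nonneg (mul_nonneg (by positivity) (hann k)) (pow_nonneg hu0.le k))]
    ring
  have hg0 : Summable fun n : ℕ => ‖b n * u^n‖ := by
    refine (Sb 0).congr fun n => ?_
    rw [Real.norm_eq_abs, abs_of_nonneg (mul_nonneg (hbnn n) (pow_nonneg hu0.le n))]
    ring
  have hg1 : Summable fun n : ℕ => ‖(n:ℝ) * b n * u^n‖ := by
    refine (Sb 1).congr fun n => ?_
    rw [Real.norm_eq_abs, abs_of_nonneg (show (0:ℝ) ≤ (n:ℝ) * b n * u^n from
      mul_nonneg (mul_nonneg (Nat.cast_nonneg n) (hbnn n)) (pow_nonneg hu0.le n))]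
    ring
  have I1 : (∑' k : ℕ, (k:ℝ) * a k * u^k) * (∑' n : ℕ, b n * u^n)
      = ∑' n : ℕ, (n:ℝ) * b n * u^n := by
    rw [tsum_mul_tsum_eq_tsum_sum_antidiagonal_of_summable_norm hf1 hg0]
    exact tsum_congr fun n => dps_inner_sum' a b hrecb u n
  have I2 : (∑' k : ℕ, (k:ℝ)^2 * a k * u^k) * (∑' n : ℕ, b n * u^n)
        + (∑' k : ℕ, (k:ℝ) * a k * u^k) * (∑' n : ℕ, (n:ℝ) * b n * u^n)
      = ∑' n : ℕ, (n:ℝ)^2 * b n * u^n := by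
    rw [tsum_mul_tsum_eq_tsum_sum_antidiagonal_of_summable_norm hf2 hg0,
        tsum_mul_tsum_eq_tsum_sum_antidiagonal_of_summable_norm hf1 hg1,
        ← Summable.tsum_add
          (summable_norm_sum_mul_antidiagonal_of_summable_norm hf2 hg0).of_norm
          (summable_norm_sum_mul_antidiagonal_of_summable_norm hf1 hg1).of_norm]
    refine tsum_congr fun n => ?_
    rw [← Finset.sum_add_distrib]
    exact dps_inner_sum2 a b hrecb u n
  have hNu : (∑' n : ℕ, b n * u^n) = E := hN u huIco
  have T1 : (∑' n : ℕ, (n:ℝ) * (b n * u^n / E)) = (∑' n : ℕ, (n:ℝ) * b n * u^n) / E := by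
    rw [← tsum_div_const]
    exact tsum_congr fun n => by ring
  have T2 : (∑' n : ℕ, (n:ℝ)^2 * (b n * u^n / E)) = (∑' n : ℕ, (n:ℝ)^2 * b n * u^n) / E := by
    rw [← tsum_div_const]
    exact tsum_congr fun n => by ring
  have Sa1' : Summable fun k : ℕ => (k:ℝ) * a k * u^k :=
    (Sa 1).congr fun k => by ring
  have Sa2' : Summable fun k : ℕ => (k:ℝ)^2 * a k * u^k :=
    (Sa 2).congr fun k => by ring
  have RHSeq : (∑' k : ℕ, (k:ℝ) * ((k:ℝ) - 1) * a k * u^k)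
      = (∑' k : ℕ, (k:ℝ)^2 * a k * u^k) - (∑' k : ℕ, (k:ℝ) * a k * u^k) := by
    rw [← Summable.tsum_sub Sa2' Sa1']
    exact tsum_congr fun k => by ring
  have e1 : (∑' n : ℕ, (n:ℝ) * b n * u^n) = (∑' k : ℕ, (k:ℝ) * a k * u^k) * E := by
    rw [← I1, hNu]
  have e2 : (∑' n : ℕ, (n:ℝ)^2 * b n * u^n)
      = (∑' k : ℕ, (k:ℝ)^2 * a k * u^k) * E
        + (∑' k : ℕ, (k:ℝ) * a k * u^k) * ((∑' k : ℕ, (k:ℝ) * a k * u^k) * E) := by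
    rw [← I2, hNu, e1]
  have goal1 : (∑' n : ℕ, (n:ℝ)^2 * (b n * u^n / E))
      - (∑' n : ℕ, (n:ℝ) * (b n * u^n / E))^2
      - (∑' n : ℕ, (n:ℝ) * (b n * u^n / E))
      = ∑' k : ℕ, (k:ℝ) * ((k:ℝ) - 1) * a k * u^k := by
    rw [T1, T2, RHSeq, e1, e2]
    field_simp
    ring
  have goal2 : 0 ≤ ∑' k : ℕ, (k:ℝ) * ((k:ℝ) - 1) * a k * u^k := by
    refine tsum_nonneg fun k => ?_
    match k with
    | 0 => simp
    | (m+1) =>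
      have h1 : ((m+1:ℕ):ℝ) - 1 = (m:ℝ) := by push_cast; ring
      rw [h1]
      exact mul_nonneg (mul_nonneg (mul_nonneg (Nat.cast_nonneg _) (Nat.cast_nonneg m))
        (hann _)) (pow_nonneg hu0.le _)
  exact ⟨goal1, goal2, by linarith [goal1, goal2]⟩
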